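/- In the three-spin model, for the RCR of the previous context, the random cluster probability of vertex 1 being connected to vertex 3 by active bonds is zero: the only hyperbond configuration η with both bonds active is (Ω*₁₂, Ω*₂₃), and no spin configuration ω is compatible with it, since Ω*₁₂ requires ω₂ = −1 while Ω*₂₃ requires ω₂ = 1. Consequently P(1 ↔_act 3) = 0 while Cov(ω₁,ω₃) ≠ 0 when J₁₂, J₂₃ > 0. -/
import Mathlib

lemma sum8 (f : (Fin 3 → ℤ) → ℝ) :
    ∑ ω ∈ Fintype.piFinset (fun _ : Fin 3 => ({-1,1} : Finset ℤ)), f ω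
    = f ![-1,-1,-1] + f ![-1,-1,1] + f ![-1,1,-1] + f ![-1,1,1]
      + f ![1,-1,-1] + f ![1,-1,1] + f ![1,1,-1] + f ![1,1,1] := by
  rw [show (Fintype.piFinset fun _ : Fin 3 => ({-1,1} : Finset ℤ))
      = {![-1,-1,-1], ![-1,-1,1], ![-1,1,-1], ![-1,1,1], ![1,-1,-1], ![1,-1,1], ![1,1,-1], ![1,1,1]}
      from by decide]
  rw [Finset.sum_insert (by decide), Finset.sum_insert (by decide),
    Finset.sum_insert (by decide), Finset.sum_insert (by decide),
    Finset.sum_insert (by decide), Finset.sum_insert (by decide),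
    Finset.sum_insert (by decide), Finset.sum_singleton]
  ring

/-- In the three-spin model, no spin configuration is compatible with both bonds being
active, so the random cluster connectivity `P(1 ↔_act 3)` vanishes, while `Cov(ω₁,ω₃) ≠ 0`
for `J₁₂, J₂₃ > 0`. -/
theorem stmt_8 (J12 J23 : ℝ) (hJ12 : 0 < J12) (hJ23 : 0 < J23) :
    let S : Finset ℤ := {-1, 1}
    let Ωc := Fintype.piFinset fun _ : Fin 3 => S
    let Z : ℝ := 2 * (2 + Real.exp J12 + Real.exp J23)
    let μ : (Fin 3 → ℤ) → ℝ := fun ω =>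
      Real.exp (J12 * (if ω 0 = -1 ∧ ω 1 = -1 then 1 else 0)
        + J23 * (if ω 1 = 1 ∧ ω 2 = 1 then 1 else 0)) / Z
    let ν : Bool × Bool → ℝ := fun η =>
      (if η.1 then 1 - Real.exp (-J12) else Real.exp (-J12)) *
        (if η.2 then 1 - Real.exp (-J23) else Real.exp (-J23))
    let compat : (Fin 3 → ℤ) → Bool × Bool → Prop := fun ω η =>
      (η.1 = true → ω 0 = -1 ∧ ω 1 = -1) ∧ (η.2 = true → ω 1 = 1 ∧ ω 2 = 1)
    let count : Bool × Bool → ℝ := fun η =>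
      ((Ωc.filter fun ω => compat ω η).card : ℝ)
    let Pact : ℝ := ν (true, true) * count (true, true) / ∑ η : Bool × Bool, ν η * count η
    let Cov : ℝ := (∑ ω ∈ Ωc, ((ω 0 * ω 2 : ℤ) : ℝ) * μ ω)
      - (∑ ω ∈ Ωc, ((ω 0 : ℤ) : ℝ) * μ ω) * (∑ ω ∈ Ωc, ((ω 2 : ℤ) : ℝ) * μ ω)
    (Ωc.filter fun ω => compat ω (true, true)) = ∅ ∧ Pact = 0 ∧ Cov ≠ 0 := by
  intro S Ωc Z μ ν compat count Pact Cov
  have hfilter : (Ωc.filter fun ω => compat ω (true, true)) = ∅ := by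
    apply Finset.filter_eq_empty_iff.2
    intro ω _ h
    obtain ⟨h1, h2⟩ := h
    have e1 := (h1 rfl).2
    have e2 := (h2 rfl).1
    omega
  refine ⟨hfilter, ?_, ?_⟩
  · show ν (true, true) * count (true, true) / _ = 0
    have : count (true, true) = 0 := by
      show ((Ωc.filter fun ω => compat ω (true, true)).card : ℝ) = 0
      rw [hfilter]; simp
    rw [this, mul_zero, zero_div]
  · have ha : 1 < Real.exp J12 := by
      rw [show (1 : ℝ) = Real.exp 0 by simp]; exact Real.exp_lt_exp.2 hJ12
    have hb : 1 < Real.exp J23 := by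
      rw [show (1 : ℝ) = Real.exp 0 by simp]; exact Real.exp_lt_exp.2 hJ23
    have hZ : 0 < Z := by
      have := Real.exp_pos J12
      have := Real.exp_pos J23
      show (0:ℝ) < 2 * (2 + Real.exp J12 + Real.exp J23)
      nlinarith
    have hZ' : Z ≠ 0 := ne_of_gt hZ
    have h1 : (∑ ω ∈ Ωc, ((ω 0 * ω 2 : ℤ) : ℝ) * μ ω) = 0 := by
      show (∑ ω ∈ Fintype.piFinset (fun _ : Fin 3 => ({-1,1} : Finset ℤ)),
        ((ω 0 * ω 2 : ℤ) : ℝ) * μ ω) = 0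
      rw [sum8]
      norm_num [μ, Matrix.cons_val_zero, Matrix.cons_val_one, Matrix.head_cons,
        Matrix.cons_val_two, Matrix.tail_cons]
    have h2 : (∑ ω ∈ Ωc, ((ω 0 : ℤ) : ℝ) * μ ω) = (2 - 2 * Real.exp J12) / Z := by
      show (∑ ω ∈ Fintype.piFinset (fun _ : Fin 3 => ({-1,1} : Finset ℤ)),
        ((ω 0 : ℤ) : ℝ) * μ ω) = _
      rw [sum8]
      norm_num [μ, Matrix.cons_val_zero, Matrix.cons_val_one, Matrix.head_cons,
        Matrix.cons_val_two, Matrix.tail_cons]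
      field_simp
      ring
    have h3 : (∑ ω ∈ Ωc, ((ω 2 : ℤ) : ℝ) * μ ω) = (2 * Real.exp J23 - 2) / Z := by
      show (∑ ω ∈ Fintype.piFinset (fun _ : Fin 3 => ({-1,1} : Finset ℤ)),
        ((ω 2 : ℤ) : ℝ) * μ ω) = _
      rw [sum8]
      norm_num [μ, Matrix.cons_val_zero, Matrix.cons_val_one, Matrix.head_cons,
        Matrix.cons_val_two, Matrix.tail_cons]
      field_simp
      ring
    show (∑ ω ∈ Ωc, ((ω 0 * ω 2 : ℤ) : ℝ) * μ ω)
      - (∑ ω ∈ Ωc, ((ω 0 : ℤ) : ℝ) * μ ω) * (∑ ω ∈ Ωc, ((ω 2 : ℤ) : ℝ) * μ ω) ≠ 0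
    rw [h1, h2, h3]
    have hpos : (0:ℝ) < (2 * Real.exp J12 - 2) * (2 * Real.exp J23 - 2) / (Z * Z) := by
      apply div_pos
      · nlinarith
      · nlinarith
    intro hcontra
    rw [div_mul_div_comm] at hcontra
    have heq : (2 - 2 * Real.exp J12) * (2 * Real.exp J23 - 2) / (Z * Z)
        = -((2 * Real.exp J12 - 2) * (2 * Real.exp J23 - 2) / (Z * Z)) := by ring
    rw [heq] at hcontra
    linarith
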